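/- The map I_∞ : [0,∞] → Δ, x ↦ f_{x,1}, is a morphism of quantales from ([0,∞], +, 0) with the reversed order to (Δ, ⊗, ε): it preserves suprema, I_∞(0) = ε, and I_∞(x+y) = I_∞(x) ⊗ I_∞(y); moreover it has right adjoint P_∞(f) = inf{x : f(x) = 1} and left adjoint O_∞(f) = sup{x : f(x) = 0}. -/

import Mathlib

open scoped ENNReal

noncomputable section

/-- A distribution function: a monotone map `f : [0,∞] → [0,1]` which is
left continuous in the sense that `f x = ⨆ y < x, f y`. (We realise `[0,1]`
as the elements of `ℝ≥0∞` below `1`.) -/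
def IsDistr (f : ℝ≥0∞ → ℝ≥0∞) : Prop :=
  (∀ t, f t ≤ 1) ∧ Monotone f ∧ ∀ x, f x = ⨆ y, ⨆ _ : y < x, f y

/-- The set `Δ` of distribution functions, with the pointwise order. -/
def Distr : Type := {f : ℝ≥0∞ → ℝ≥0∞ // IsDistr f}

noncomputable instance : PartialOrder Distr :=
  inferInstanceAs (PartialOrder {f : ℝ≥0∞ → ℝ≥0∞ // IsDistr f})

/-- The step function `f_{δ,u}`: value `0` for `t ≤ δ` and `u` for `t > δ`. -/
def stepFun (δ u : ℝ≥0∞) : ℝ≥0∞ → ℝ≥0∞ := fun t => if t ≤ δ then 0 else u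

/-- The convolution product `(f ⊗ g)(t) = ⨆_{r+s ≤ t} f r * g s`. -/
def conv (f g : ℝ≥0∞ → ℝ≥0∞) : ℝ≥0∞ → ℝ≥0∞ :=
  fun t => ⨆ r, ⨆ s, ⨆ _ : r + s ≤ t, f r * g s

/-- The unit `ε = f_{0,1}` of the quantale `Δ`. -/
def epsFun : ℝ≥0∞ → ℝ≥0∞ := stepFun 0 1

/-- The map `I∞ : [0,∞] → Δ`, `x ↦ f_{x,1}`, is a morphism of quantales from
`([0,∞], ≥, +, 0)` to `(Δ, ⊗, ε)`: it sends suprema of `([0,∞], ≥)` (that is,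
infima of `[0,∞]`) to suprema in `Δ`, sends the unit `0` to `ε`, and sends
`+` to `⊗`; moreover it has right adjoint `P∞ f = inf {x | f x = 1}` and left
adjoint `O∞ f = sup {x | f x = 0}` (adjointness taken with respect to the
reversed order on `[0,∞]`). -/
theorem Iinfty_quantale_morphism (I : ℝ≥0∞ → Distr)
    (hI : ∀ x, (I x).1 = stepFun x 1) :
    (∀ S : Set ℝ≥0∞, IsLUB (I '' S) (I (sInf S))) ∧
    (I 0).1 = epsFun ∧
    (∀ x y, conv (I x).1 (I y).1 = (I (x + y)).1) ∧
    (∀ (x : ℝ≥0∞) (f : Distr), I x ≤ f ↔ sInf {t | f.1 t = 1} ≤ x) ∧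
    (∀ (x : ℝ≥0∞) (f : Distr), f ≤ I x ↔ x ≤ sSup {t | f.1 t = 0}) := by
  have hle : ∀ f g : Distr, f ≤ g ↔ ∀ t, f.1 t ≤ g.1 t := fun f g => Iff.rfl
  have hanti : ∀ {x y : ℝ≥0∞}, x ≤ y → I y ≤ I x := by
    intro x y hxy
    rw [hle]; intro t
    rw [hI, hI]
    unfold stepFun
    split_ifs with h1 h2 h3
    · exact le_rfl
    · exact zero_le
    · exact absurd (h3.trans hxy) h1
    · exact le_rfl
  refine ⟨?_, ?_, ?_, ?_, ?_⟩
  · intro S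
    constructor
    · rintro _ ⟨s, hs, rfl⟩
      exact hanti (sInf_le hs)
    · intro f hf
      rw [hle]; intro t
      rw [hI]
      unfold stepFun
      split_ifs with h
      · exact zero_le
      · push_neg at h
        obtain ⟨s, hsS, hst⟩ := sInf_lt_iff.mp h
        have h2 := (hle _ _).mp (hf (Set.mem_image_of_mem I hsS)) t
        rw [hI] at h2
        simpa [stepFun, not_le.mpr hst] using h2
  · rw [hI]; rfl
  · intro x y
    funext t
    rw [hI, hI, hI]
    unfold conv stepFun
    rcases le_or_gt t (x + y) with h | h
    · rw [if_pos h]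
      refine le_antisymm ?_ (zero_le)
      refine iSup_le fun r => iSup_le fun s => iSup_le fun hrs => ?_
      by_cases hr : r ≤ x
      · simp [hr]
      · by_cases hs : s ≤ y
        · simp [hs]
        · exact absurd (hrs.trans h)
            (ENNReal.add_lt_add (not_le.mp hr) (not_le.mp hs)).not_ge
    · rw [if_neg (not_le.mpr h)]
      refine le_antisymm (iSup_le fun r => iSup_le fun s => iSup_le fun _ => ?_) ?_
      · exact mul_le_one' (by split_ifs <;> simp) (by split_ifs <;> simp)
      · have hx : x ≠ ⊤ := fun hx => by simp [hx] at h
        have hy : y ≠ ⊤ := fun hy => by simp [hy] at h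
        rcases eq_or_ne t ⊤ with rfl | ht
        · refine le_trans ?_ (le_iSup _ (x + 1))
          refine le_trans ?_ (le_iSup _ (y + 1))
          refine le_trans ?_ (le_iSup _ le_top)
          have h1 : ¬(x + 1 ≤ x) := not_le.mpr (ENNReal.lt_add_right hx one_ne_zero)
          have h2 : ¬(y + 1 ≤ y) := not_le.mpr (ENNReal.lt_add_right hy one_ne_zero)
          simp [h1, h2]
        · set δ := (t - (x + y)) / 2 with hδdef
          have hδ : 0 < δ := ENNReal.div_pos (tsub_pos_of_lt h).ne' ENNReal.ofNat_ne_top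
          have hsum : (x + δ) + (y + δ) = t := by
            have e : (x + δ) + (y + δ) = (x + y) + (δ + δ) := by ring
            rw [e, hδdef, ENNReal.add_halves, add_tsub_cancel_of_le h.le]
          refine le_trans ?_ (le_iSup _ (x + δ))
          refine le_trans ?_ (le_iSup _ (y + δ))
          refine le_trans ?_ (le_iSup _ hsum.le)
          have h1 : ¬(x + δ ≤ x) := not_le.mpr (ENNReal.lt_add_right hx hδ.ne')
          have h2 : ¬(y + δ ≤ y) := not_le.mpr (ENNReal.lt_add_right hy hδ.ne')
          simp [h1, h2]
  · intro x f
    rw [hle]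
    constructor
    · intro h
      refine le_of_forall_gt_imp_ge_of_dense fun t ht => sInf_le ?_
      have h2 := h t
      rw [hI] at h2
      rw [stepFun, if_neg (not_le.mpr ht)] at h2
      exact le_antisymm (f.2.1 t) h2
    · intro h t
      rw [hI]
      unfold stepFun
      split_ifs with ht
      · exact zero_le
      · obtain ⟨s, hs, hst⟩ := sInf_lt_iff.mp (h.trans_lt (not_le.mp ht))
        exact le_trans (le_of_eq hs.symm) (f.2.2.1 hst.le)
  · intro x f
    rw [hle]
    constructor
    · intro h
      apply le_sSup
      have h2 := h x
      rw [hI] at h2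
      rw [stepFun, if_pos le_rfl] at h2
      exact nonpos_iff_eq_zero.mp h2
    · intro h t
      rw [hI]
      unfold stepFun
      split_ifs with ht
      · rw [f.2.2.2 t]
        refine iSup_le fun y => iSup_le fun hyt => ?_
        obtain ⟨s, hs, hys⟩ := lt_sSup_iff.mp (hyt.trans_le (ht.trans h))
        exact le_trans (f.2.2.1 hys.le) (le_of_eq hs)
      · exact f.2.1 t
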